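/- With the matrix notation of the SLP evaluation: if an annotated automaton A is unambiguous (each annotation in ⟦A⟧(d) arises from exactly one accepting run), then for every rule X → Y1 Y2 and every pair of states (p, q), the union over q' ∈ Q in M_X[p,q] = ⋃_{q'} M_{Y1}[p,q'] · sh(M_{Y2}[q',q], |doc(Y1)|) is a disjoint union (over distinct intermediate states q', for annotations arising in accepting contexts), and each concatenation decomposes uniquely. -/

import Mathlib

/-- An annotated automaton (AnnA) over input alphabet `A` and output alphabet
`Ω`: plain letter transitions `Δp`, annotated letter transitions `Δa`, an
initial state and final states. -/
structure AnnA (Q A Ω : Type) where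
  Δp : Q → A → Q → Prop
  Δa : Q → A → Ω → Q → Prop
  q0 : Q
  F : Set Q

/-- A run of an AnnA from state `p` over a document, recorded as a trace:
for each letter, the (optional) annotation used and the state reached. -/
inductive AnnA.Run {Q A Ω : Type} (M : AnnA Q A Ω) :
    Q → List A → List (Option Ω × Q) → Prop
  | nil {p} : M.Run p [] []
  | plain {p a q d tr} : M.Δp p a q → M.Run q d tr → M.Run p (a :: d) ((none, q) :: tr)
  | ann {p a o q d tr} : M.Δa p a o q → M.Run q d tr →
      M.Run p (a :: d) ((some o, q) :: tr)

/-- The annotation of a trace starting after position `i`: the sequence of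
pairs `(o, j)` for the positions `j` read with annotation `o` (1-indexed). -/
def annOf {Q Ω : Type} : ℕ → List (Option Ω × Q) → List (Ω × ℕ)
  | _, [] => []
  | i, (none, _) :: tr => annOf (i + 1) tr
  | i, (some o, _) :: tr => (o, i + 1) :: annOf (i + 1) tr

/-- The final state of a run starting at `p` with trace `tr`. -/
def finalState {Q Ω : Type} (p : Q) (tr : List (Option Ω × Q)) : Q :=
  (tr.map Prod.snd).getLastD p

/-- The semantics `⟦M⟧(d)`: the set of annotations of accepting runs over `d`. -/
def AnnA.sem {Q A Ω : Type} (M : AnnA Q A Ω) (d : List A) : Set (List (Ω × ℕ)) :=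
  {ν | ∃ tr, M.Run M.q0 d tr ∧ finalState M.q0 tr ∈ M.F ∧ annOf 0 tr = ν}

/-- Shift an annotation (positions in `ℕ`) by `k`. -/
def shN {Ω : Type} (ν : List (Ω × ℕ)) (k : ℕ) : List (Ω × ℕ) :=
  ν.map (fun p => (p.1, p.2 + k))

/-- Shift a set of annotations elementwise. -/
def shLN {Ω : Type} (L : Set (List (Ω × ℕ))) (k : ℕ) : Set (List (Ω × ℕ)) :=
  (fun ν => shN ν k) '' L

/-- Concatenation of annotation languages. -/
def catN {Ω : Type} (L1 L2 : Set (List (Ω × ℕ))) : Set (List (Ω × ℕ)) :=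
  Set.image2 (· ++ ·) L1 L2

/-- The partial-run matrix `M_d[p, q]`: the set of annotations of partial runs
of `M` over `d` starting in state `p` and ending in state `q`. -/
def Mmat {Q A Ω : Type} (M : AnnA Q A Ω) (d : List A) (p q : Q) :
    Set (List (Ω × ℕ)) :=
  {ν | ∃ tr, M.Run p d tr ∧ finalState p tr = q ∧ annOf 0 tr = ν}

/-- `M` is unambiguous: every annotation of an accepting run over `d` arises
from exactly one accepting run. -/
def AnnA.Unambiguous {Q A Ω : Type} (M : AnnA Q A Ω) : Prop :=
  ∀ (d : List A) (ν : List (Ω × ℕ)) (tr tr' : List (Option Ω × Q)),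
    M.Run M.q0 d tr → finalState M.q0 tr ∈ M.F → annOf 0 tr = ν →
    M.Run M.q0 d tr' → finalState M.q0 tr' ∈ M.F → annOf 0 tr' = ν →
    tr = tr'

/-- `M` is trim: every state is reachable from `q0` and co-reachable to `F`. -/
def AnnA.Trim {Q A Ω : Type} (M : AnnA Q A Ω) : Prop :=
  ∀ q : Q,
    (∃ (d : List A) (tr : List (Option Ω × Q)),
      M.Run M.q0 d tr ∧ finalState M.q0 tr = q) ∧
    (∃ (d : List A) (tr : List (Option Ω × Q)),
      M.Run q d tr ∧ finalState q tr ∈ M.F)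


section Aux

variable {Q A Ω : Type} {M : AnnA Q A Ω}

lemma run_length {p : Q} {d : List A} {tr : List (Option Ω × Q)}
    (h : M.Run p d tr) : tr.length = d.length := by
  induction h <;> simp [*]

lemma finalState_cons (p : Q) (o : Option Ω) (r : Q) (tr : List (Option Ω × Q)) :
    finalState p ((o, r) :: tr) = finalState r tr := by
  simp only [finalState, List.map_cons, List.getLastD_cons]

lemma finalState_append (p : Q) (tr1 tr2 : List (Option Ω × Q)) :
    finalState p (tr1 ++ tr2) = finalState (finalState p tr1) tr2 := by
  induction tr1 generalizing p with
  | nil => simp [finalState]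
  | cons x t ih =>
      obtain ⟨o, r⟩ := x
      rw [List.cons_append, finalState_cons, finalState_cons, ih]

lemma run_append {p : Q} {d1 d2 : List A} {tr1 tr2 : List (Option Ω × Q)}
    (h1 : M.Run p d1 tr1) (h2 : M.Run (finalState p tr1) d2 tr2) :
    M.Run p (d1 ++ d2) (tr1 ++ tr2) := by
  induction h1 with
  | nil => simpa [finalState] using h2
  | plain hΔ hr ih =>
      rw [finalState_cons] at h2
      exact AnnA.Run.plain hΔ (ih h2)
  | ann hΔ hr ih =>
      rw [finalState_cons] at h2
      exact AnnA.Run.ann hΔ (ih h2)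

lemma annOf_append (i : ℕ) (tr1 tr2 : List (Option Ω × Q)) :
    annOf i (tr1 ++ tr2) = annOf i tr1 ++ annOf (i + tr1.length) tr2 := by
  induction tr1 generalizing i with
  | nil => simp [annOf]
  | cons x t ih =>
      obtain ⟨o, r⟩ := x
      have hl : i + 1 + t.length = i + (t.length + 1) := by omega
      cases o <;> simp [annOf, ih, hl]

lemma annOf_shift (i k : ℕ) (tr : List (Option Ω × Q)) :
    annOf (i + k) tr = shN (annOf i tr) k := by
  induction tr generalizing i with
  | nil => simp [annOf, shN]
  | cons x t ih =>
      obtain ⟨o, r⟩ := x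
      have : i + k + 1 = (i + 1) + k := by omega
      cases o <;> simp [annOf, shN, this, ih (i + 1)]

lemma annOf_eq_shN (i : ℕ) (tr : List (Option Ω × Q)) :
    annOf i tr = shN (annOf 0 tr) i := by
  simpa using annOf_shift 0 i tr

lemma mem_annOf_bound {i : ℕ} {tr : List (Option Ω × Q)} {x : Ω × ℕ}
    (hx : x ∈ annOf i tr) : i < x.2 ∧ x.2 ≤ i + tr.length := by
  induction tr generalizing i with
  | nil => simp [annOf] at hx
  | cons y t ih =>
      obtain ⟨o, r⟩ := y
      simp only [List.length_cons]
      cases o with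
      | none =>
          have := ih (i := i + 1) (by simpa [annOf] using hx)
          omega
      | some o =>
          simp only [annOf, List.mem_cons] at hx
          rcases hx with hx | hx
          · subst hx
            exact ⟨Nat.lt_succ_self i, by omega⟩
          · have := ih hx
            omega

lemma shN_injective (k : ℕ) : Function.Injective (fun ν : List (Ω × ℕ) => shN ν k) := by
  intro a b h
  refine List.map_injective_iff.mpr ?_ h
  rintro ⟨o1, n1⟩ ⟨o2, n2⟩ hx
  simp at hx
  obtain ⟨h1, h2⟩ := hx
  simp [h1]
  omega

lemma append_split_unique {α : Type*} (P : α → Prop) {a b a' b' : List α}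
    (h : a ++ b = a' ++ b') (ha : ∀ x ∈ a, P x) (hb : ∀ x ∈ b, ¬ P x)
    (ha' : ∀ x ∈ a', P x) (hb' : ∀ x ∈ b', ¬ P x) : a = a' ∧ b = b' := by
  induction a generalizing a' with
  | nil =>
      cases a' with
      | nil => simpa using h
      | cons y s =>
          exfalso
          simp only [List.nil_append, List.cons_append] at h
          exact hb y (h ▸ List.mem_cons_self) (ha' y (List.mem_cons_self))
  | cons x t ih =>
      cases a' with
      | nil =>
          exfalso
          simp only [List.nil_append, List.cons_append] at h
          exact hb' x (h ▸ List.mem_cons_self) (ha x (List.mem_cons_self))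
      | cons y s =>
          simp only [List.cons_append, List.cons.injEq] at h
          obtain ⟨rfl, h⟩ := h
          have := ih h (fun z hz => ha z (List.mem_cons_of_mem _ hz))
            (fun z hz => ha' z (List.mem_cons_of_mem _ hz))
          exact ⟨by rw [this.1], this.2⟩

lemma mem_Mmat_bound {d : List A} {p q : Q} {ν : List (Ω × ℕ)}
    (hν : ν ∈ Mmat M d p q) : ∀ x ∈ ν, x.2 ≤ d.length := by
  obtain ⟨tr, hr, _, rfl⟩ := hν
  intro x hx
  have := mem_annOf_bound hx
  have := run_length hr
  omega

lemma mem_shLN_Mmat_bound {d : List A} {p q : Q} {k : ℕ} {μ : List (Ω × ℕ)}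
    (hμ : μ ∈ shLN (Mmat M d p q) k) : ∀ x ∈ μ, ¬ x.2 ≤ k := by
  obtain ⟨μ0, ⟨tr, hr, _, rfl⟩, rfl⟩ := hμ
  rintro x hx
  simp [shN] at hx
  obtain ⟨o, n, hmem, rfl, rfl⟩ := hx
  have := mem_annOf_bound hmem
  simp at this ⊢
  omega

end Aux

/-- For an unambiguous trim AnnA and a rule `X → Y1 Y2` (so
`doc(X) = doc(Y1) · doc(Y2)`), the union over intermediate states `q'` in
`M_X[p,q] = ⋃_{q'} M_{Y1}[p,q'] · sh(M_{Y2}[q',q], |doc(Y1)|)` is a disjoint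
union, and each concatenation decomposes uniquely. -/
theorem slp_rule_union_disjoint {Q A Ω : Type} (M : AnnA Q A Ω)
    (hunamb : M.Unambiguous) (htrim : M.Trim)
    (docY1 docY2 : List A) (p q : Q) :
    (∀ q1 q2 : Q, q1 ≠ q2 →
      Disjoint (catN (Mmat M docY1 p q1) (shLN (Mmat M docY2 q1 q) docY1.length))
               (catN (Mmat M docY1 p q2) (shLN (Mmat M docY2 q2 q) docY1.length))) ∧
    (∀ q' : Q, ∀ w ∈ catN (Mmat M docY1 p q') (shLN (Mmat M docY2 q' q) docY1.length),
      ∃! pr : List (Ω × ℕ) × List (Ω × ℕ),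
        pr.1 ∈ Mmat M docY1 p q' ∧ pr.2 ∈ shLN (Mmat M docY2 q' q) docY1.length ∧
        w = pr.1 ++ pr.2) := by
  classical
  set k := docY1.length with hk
  -- uniqueness of the split point
  have split : ∀ (q1 q2 : Q) (a b a' b' : List (Ω × ℕ)),
      a ∈ Mmat M docY1 p q1 → b ∈ shLN (Mmat M docY2 q1 q) k →
      a' ∈ Mmat M docY1 p q2 → b' ∈ shLN (Mmat M docY2 q2 q) k →
      a ++ b = a' ++ b' → a = a' ∧ b = b' := by
    intro q1 q2 a b a' b' ha hb ha' hb' h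
    exact append_split_unique (fun x => x.2 ≤ k) h
      (mem_Mmat_bound ha) (mem_shLN_Mmat_bound hb)
      (mem_Mmat_bound ha') (mem_shLN_Mmat_bound hb')
  constructor
  · intro q1 q2 hne
    rw [Set.disjoint_left]
    rintro w ⟨ν1, hν1, μ1s, hμ1s, rfl⟩ ⟨ν2, hν2, μ2s, hμ2s, heq⟩
    obtain ⟨eq1, eq2⟩ := split q2 q1 ν2 μ2s ν1 μ1s hν2 hμ2s hν1 hμ1s heq
    subst eq1; subst eq2
    obtain ⟨μ1, hμ1, hsh1⟩ := hμ1s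
    obtain ⟨μ2, hμ2, hsh2⟩ := hμ2s
    have hμeq : μ2 = μ1 := shN_injective k (by rw [hsh1, hsh2])
    subst hμeq
    obtain ⟨tr1, hr1, hf1, hann1⟩ := hν1
    obtain ⟨tr1', hr1', hf1', hann1'⟩ := hν2
    obtain ⟨tr2, hr2, hf2, hann2⟩ := hμ1
    obtain ⟨tr2', hr2', hf2', hann2'⟩ := hμ2
    obtain ⟨⟨d0, tr0, hr0, hf0⟩, -⟩ := htrim p
    obtain ⟨-, ⟨d3, tr3, hr3, hf3⟩⟩ := htrim q
    -- lengths
    have l1 : tr1.length = docY1.length := run_length hr1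
    have l1' : tr1'.length = docY1.length := run_length hr1'
    have l2 : tr2.length = docY2.length := run_length hr2
    have l2' : tr2'.length = docY2.length := run_length hr2'
    -- assemble the two accepting runs
    have R1 : M.Run M.q0 (d0 ++ (docY1 ++ (docY2 ++ d3))) (tr0 ++ (tr1 ++ (tr2 ++ tr3))) := by
      refine run_append hr0 ?_
      rw [hf0]
      refine run_append hr1 ?_
      rw [hf1]
      refine run_append hr2 ?_
      rw [hf2]
      exact hr3
    have R2 : M.Run M.q0 (d0 ++ (docY1 ++ (docY2 ++ d3))) (tr0 ++ (tr1' ++ (tr2' ++ tr3))) := by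
      refine run_append hr0 ?_
      rw [hf0]
      refine run_append hr1' ?_
      rw [hf1']
      refine run_append hr2' ?_
      rw [hf2']
      exact hr3
    have F1 : finalState M.q0 (tr0 ++ (tr1 ++ (tr2 ++ tr3))) ∈ M.F := by
      rw [finalState_append, hf0, finalState_append, hf1, finalState_append, hf2]
      exact hf3
    have F2 : finalState M.q0 (tr0 ++ (tr1' ++ (tr2' ++ tr3))) ∈ M.F := by
      rw [finalState_append, hf0, finalState_append, hf1', finalState_append, hf2']
      exact hf3
    -- annotations agree
    have Ann : annOf 0 (tr0 ++ (tr1 ++ (tr2 ++ tr3)))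
        = annOf 0 (tr0 ++ (tr1' ++ (tr2' ++ tr3))) := by
      rw [annOf_append, annOf_append, annOf_append, annOf_append, annOf_append, annOf_append]
      have e1 : annOf (0 + tr0.length) tr1 = annOf (0 + tr0.length) tr1' := by
        rw [annOf_eq_shN (0 + tr0.length) tr1, annOf_eq_shN (0 + tr0.length) tr1',
          hann1, hann1']
      have e2 : annOf (0 + tr0.length + tr1.length) tr2
          = annOf (0 + tr0.length + tr1'.length) tr2' := by
        rw [annOf_eq_shN (0 + tr0.length + tr1.length) tr2,
          annOf_eq_shN (0 + tr0.length + tr1'.length) tr2', hann2, hann2', l1, l1']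
      have e3 : (0 : ℕ) + tr0.length + tr1.length + tr2.length
          = 0 + tr0.length + tr1'.length + tr2'.length := by omega
      rw [e1, e2, e3]
    have := hunamb _ _ _ _ R1 F1 rfl R2 F2 Ann.symm
    have hcancel : tr1 ++ (tr2 ++ tr3) = tr1' ++ (tr2' ++ tr3) :=
      List.append_cancel_left this
    have := List.append_inj hcancel (by omega)
    have htr1 : tr1 = tr1' := this.1
    exact hne (by rw [← hf1, ← hf1', htr1])
  · intro q' w hw
    obtain ⟨a, ha, b, hb, rfl⟩ := hw
    refine ⟨(a, b), ⟨ha, hb, rfl⟩, ?_⟩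
    rintro ⟨a', b'⟩ ⟨ha', hb', heq⟩
    obtain ⟨e1, e2⟩ := split q' q' a' b' a b ha' hb' ha hb heq.symm
    simp [e1, e2]
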